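/- For q = 1/n and n ≥ 2, the quantity ((2^n q - 1)/(2^n - 1))·(log q - log((1-q)/(2^n - 1))) is at most log 2. -/

import Mathlib

theorem stmt13 (n : ℕ) (hn : 2 ≤ n) :
    (((2 ^ n : ℝ) * (1 / n) - 1) / ((2 ^ n : ℝ) - 1)) *
      (Real.log (1 / (n : ℝ)) - Real.log ((1 - 1 / (n : ℝ)) / ((2 ^ n : ℝ) - 1)))
      ≤ Real.log 2 := by
  have hn2 : (2:ℝ) ≤ (n:ℝ) := by exact_mod_cast hn
  have hn0 : (0:ℝ) < n := by linarith
  have hnP : (n:ℝ) < 2 ^ n := by exact_mod_cast (Nat.lt_two_pow_self (n := n))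
  have hP1 : (1:ℝ) < 2 ^ n := by linarith
  set P : ℝ := 2 ^ n with hPdef
  have hne : (n:ℝ) ≠ 0 := ne_of_gt hn0
  have hn1 : (0:ℝ) < (n:ℝ) - 1 := by linarith
  have hn1' : (n:ℝ) - 1 ≠ 0 := ne_of_gt hn1
  have hPm : (0:ℝ) < P - 1 := by linarith
  have hPm' : P - 1 ≠ 0 := ne_of_gt hPm
  have h1mn : (0:ℝ) < 1 - 1/(n:ℝ) := by
    rw [sub_pos, div_lt_one hn0]; linarith
  have hB : Real.log (1 / (n : ℝ)) - Real.log ((1 - 1 / (n : ℝ)) / (P - 1))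
      = Real.log ((P - 1) / ((n:ℝ) - 1)) := by
    rw [← Real.log_div (by positivity) (by positivity)]
    congr 1
    field_simp
  rw [hB]
  have hB0 : 0 ≤ Real.log ((P - 1) / ((n:ℝ) - 1)) := by
    apply Real.log_nonneg
    rw [le_div_iff₀ hn1]; linarith
  have hBle : Real.log ((P - 1) / ((n:ℝ) - 1)) ≤ (n:ℝ) * Real.log 2 := by
    have : Real.log ((P - 1) / ((n:ℝ) - 1)) ≤ Real.log P := by
      apply Real.log_le_log (by positivity)
      rw [div_le_iff₀ hn1]
      nlinarith
    calc Real.log ((P - 1) / ((n:ℝ) - 1)) ≤ Real.log P := this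
      _ = (n:ℝ) * Real.log 2 := by
          rw [hPdef, Real.log_pow]
  have hA1 : (P * (1/(n:ℝ)) - 1) / (P - 1) ≤ 1/(n:ℝ) := by
    rw [div_le_iff₀ hPm]
    have h1n : 1/(n:ℝ) ≤ 1 := by rw [div_le_one hn0]; linarith
    nlinarith
  calc (P * (1/(n:ℝ)) - 1) / (P - 1) * Real.log ((P - 1) / ((n:ℝ) - 1))
      ≤ (1/(n:ℝ)) * ((n:ℝ) * Real.log 2) := by
        apply mul_le_mul hA1 hBle hB0 (by positivity)
    _ = Real.log 2 := by field_simp
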